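/- arXiv:1801.08243 — 2 statements merged into one kernel-verified Lean document; each statement's English description precedes it below -/
import Mathlib

section
/- Let G be a finite simple graph and let M̂ be the Gram matrix of an optimal vector coloring of G having the maximum possible rank among all optimal vector colorings. Then im(M) ⊆ im(M̂) for the Gram matrix M of every optimal vector coloring of G. -/
open Matrix Kronecker

noncomputable section VectorColoring

variable {V α β : Type*}

/-- A vector `t`-coloring of a graph `G`: vectors `p i` with `p i ⬝ᵥ p i = t - 1`
and `p i ⬝ᵥ p j ≤ -1` on edges. -/
def IsVecColoring [Fintype V] (G : SimpleGraph V) (t : ℝ) {d : ℕ}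
    (p : V → Fin d → ℝ) : Prop :=
  (∀ i, p i ⬝ᵥ p i = t - 1) ∧ ∀ i j, G.Adj i j → p i ⬝ᵥ p j ≤ -1

/-- The vector chromatic number: the least `t ≥ 1` admitting a vector `t`-coloring. -/
def vecChrom [Fintype V] (G : SimpleGraph V) : ℝ :=
  sInf {t : ℝ | 1 ≤ t ∧ ∃ (d : ℕ) (p : V → Fin d → ℝ), IsVecColoring G t p}

/-- A strict vector `t`-coloring: `p i ⬝ᵥ p j = -1` on edges. -/
def IsStrictVecColoring [Fintype V] (G : SimpleGraph V) (t : ℝ) {d : ℕ}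
    (p : V → Fin d → ℝ) : Prop :=
  (∀ i, p i ⬝ᵥ p i = t - 1) ∧ ∀ i j, G.Adj i j → p i ⬝ᵥ p j = -1

/-- The strict vector chromatic number. -/
def strictVecChrom [Fintype V] (G : SimpleGraph V) : ℝ :=
  sInf {t : ℝ | 1 ≤ t ∧ ∃ (d : ℕ) (p : V → Fin d → ℝ), IsStrictVecColoring G t p}

/-- The Gram matrix of a family of vectors. -/
def gramMat {d : ℕ} (p : V → Fin d → ℝ) : Matrix V V ℝ :=
  Matrix.of fun i j => p i ⬝ᵥ p j

/-- `M` is the Gram matrix of an optimal vector coloring of `G`. -/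
def IsOptGram [Fintype V] (G : SimpleGraph V) (M : Matrix V V ℝ) : Prop :=
  ∃ (d : ℕ) (p : V → Fin d → ℝ), IsVecColoring G (vecChrom G) p ∧ M = gramMat p

/-- `grk G = rk(G)`: the maximum rank of the Gram matrix of an optimal vector coloring. -/
def grk [Fintype V] (G : SimpleGraph V) : ℕ :=
  sSup {r : ℕ | ∃ M : Matrix V V ℝ, IsOptGram G M ∧ M.rank = r}

/-- The categorical (tensor) product of graphs. -/
def catProd (G : SimpleGraph α) (H : SimpleGraph β) : SimpleGraph (α × β) where
  Adj x y := G.Adj x.1 y.1 ∧ H.Adj x.2 y.2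
  symm := by constructor; intro x y hxy; exact ⟨hxy.1.symm, hxy.2.symm⟩
  loopless := by constructor; intro x hx; exact G.irrefl hx.1

/-- A feasible dual solution for `vecChrom G`. -/
def IsDualSol [Fintype V] (G : SimpleGraph V) (B : Matrix V V ℝ) : Prop :=
  B.PosSemidef ∧ (∀ i j, i ≠ j → ¬ G.Adj i j → B i j = 0) ∧
    (∀ i j, 0 ≤ B i j) ∧ B.trace = 1

/-- An optimal dual solution for `vecChrom G`: feasible with objective value `vecChrom G`. -/
def IsOptDual [Fintype V] (G : SimpleGraph V) (B : Matrix V V ℝ) : Prop :=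
  IsDualSol G B ∧ (∑ i, ∑ j, B i j) = vecChrom G

/-- The all-ones matrix `J`. -/
def allOnes (γ : Type*) : Matrix γ γ ℝ :=
  Matrix.of fun _ _ => 1

/-- The graph `G(B)` of a (symmetric) matrix `B`: distinct `i, j` adjacent iff `B i j ≠ 0`. -/
def matGraph (B : Matrix V V ℝ) : SimpleGraph V where
  Adj i j := i ≠ j ∧ B i j ≠ 0 ∧ B j i ≠ 0
  symm := by constructor; intro i j hij; exact ⟨hij.1.symm, hij.2.2, hij.2.1⟩
  loopless := by constructor; intro i hi; exact hi.1 rfl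

/-- The spanning subgraph `G^p` of edges tight in the vector coloring `p`. -/
def tightSub [Fintype V] (G : SimpleGraph V) {d : ℕ} (p : V → Fin d → ℝ) :
    SimpleGraph V where
  Adj i j := G.Adj i j ∧ p i ⬝ᵥ p j = -1
  symm := by
    constructor
    intro i j hij
    exact ⟨hij.1.symm, by rw [dotProduct_comm]; exact hij.2⟩
  loopless := by constructor; intro i hi; exact G.irrefl hi.1

/-- The skeleton `G^sk`: the spanning subgraph of edges tight in every optimal
vector coloring. -/
def skeleton [Fintype V] (G : SimpleGraph V) : SimpleGraph V where
  Adj i j := G.Adj i j ∧ ∀ (d : ℕ) (p : V → Fin d → ℝ),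
      IsVecColoring G (vecChrom G) p → p i ⬝ᵥ p j = -1
  symm := by
    constructor
    intro i j hij
    refine ⟨hij.1.symm, fun d p hp => ?_⟩
    rw [dotProduct_comm]
    exact hij.2 d p hp
  loopless := by constructor; intro i hi; exact G.irrefl hi.1

/-- `i` is neighborly in the vector coloring `p`: `-p i` lies in the conical hull of
the vectors of the `∼_p`-neighbours of `i`. -/
def NeighborlyIn [Fintype V] (G : SimpleGraph V) {d : ℕ} (p : V → Fin d → ℝ)
    (i : V) : Prop :=
  ∃ c : V → ℝ, (∀ j, 0 ≤ c j) ∧ (∀ j, c j ≠ 0 → G.Adj i j ∧ p i ⬝ᵥ p j = -1) ∧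
    -p i = ∑ j, c j • p j

/-- `i` is neighborly: neighborly in every optimal vector coloring. -/
def Neighborly [Fintype V] (G : SimpleGraph V) (i : V) : Prop :=
  ∀ (d : ℕ) (p : V → Fin d → ℝ), IsVecColoring G (vecChrom G) p → NeighborlyIn G p i

/-- `i →_p j`: `-p i = ∑ α_l • p l` over `∼_p`-neighbours `l` of `i`, with `α_j > 0`. -/
def ArrowIn [Fintype V] (G : SimpleGraph V) {d : ℕ} (p : V → Fin d → ℝ)
    (i j : V) : Prop :=
  ∃ c : V → ℝ, (∀ l, 0 ≤ c l) ∧ (∀ l, c l ≠ 0 → G.Adj i l ∧ p i ⬝ᵥ p l = -1) ∧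
    0 < c j ∧ -p i = ∑ l, c l • p l

/-- `μ` is an eigenvalue of `M`. -/
def IsEigenvalue [Fintype V] (M : Matrix V V ℝ) (μ : ℝ) : Prop :=
  ∃ v : V → ℝ, v ≠ 0 ∧ M *ᵥ v = μ • v

/-- `lam` is the largest eigenvalue of `M`. -/
def IsMaxEigenvalue [Fintype V] (M : Matrix V V ℝ) (lam : ℝ) : Prop :=
  IsGreatest {μ : ℝ | IsEigenvalue M μ} lam

/-- `lam` is the smallest eigenvalue of `M`. -/
def IsMinEigenvalue [Fintype V] (M : Matrix V V ℝ) (lam : ℝ) : Prop :=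
  IsLeast {μ : ℝ | IsEigenvalue M μ} lam

/-- The eigenspace of `M` for `μ`. -/
def eigSpace [Fintype V] (M : Matrix V V ℝ) (μ : ℝ) : Submodule ℝ (V → ℝ) :=
  LinearMap.ker (M.mulVecLin - μ • (LinearMap.id : (V → ℝ) →ₗ[ℝ] V → ℝ))

/-- `W` is (the Gram matrix of) a convex combination of vector colorings of `G × H`
induced by `G` and by `H`: `W = a • (M ⊗ J) + b • (J ⊗ N)`. -/
def IsConvexCombInduced [Fintype α] [Fintype β] (G : SimpleGraph α) (H : SimpleGraph β)
    (W : Matrix (α × β) (α × β) ℝ) : Prop :=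
  ∃ (a b : ℝ) (M : Matrix α α ℝ) (N : Matrix β β ℝ),
    0 ≤ a ∧ 0 ≤ b ∧ a + b = 1 ∧ IsOptGram G M ∧ IsOptGram H N ∧
    W = a • (M ⊗ₖ allOnes β) + b • (allOnes α ⊗ₖ N)

end VectorColoring

private lemma factor_of_ker_le {K X Y Z : Type*} [Field K] [AddCommGroup X] [Module K X]
    [AddCommGroup Y] [Module K Y] [AddCommGroup Z] [Module K Z]
    (f : X →ₗ[K] Y) (g : X →ₗ[K] Z) (hk : LinearMap.ker g ≤ LinearMap.ker f) :
    ∃ h : Z →ₗ[K] Y, f = h ∘ₗ g := by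
  let h₀ : LinearMap.range g →ₗ[K] Y :=
    (Submodule.liftQ (LinearMap.ker g) f hk) ∘ₗ (g.quotKerEquivRange).symm.toLinearMap
  obtain ⟨h, hh⟩ := LinearMap.exists_extend h₀
  refine ⟨h, ?_⟩
  ext x
  have h1 : (g.quotKerEquivRange).symm ⟨g x, LinearMap.mem_range_self g x⟩
      = Submodule.Quotient.mk x := by
    rw [LinearEquiv.symm_apply_eq]
    exact Subtype.ext (g.quotKerEquivRange_apply_mk x).symm
  have h2 := congrFun (congrArg (fun (F : LinearMap.range g →ₗ[K] Y) => (F : LinearMap.range g → Y)) hh)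
    ⟨g x, LinearMap.mem_range_self g x⟩
  simp only [LinearMap.comp_apply, Submodule.coe_subtype] at h2 ⊢
  rw [h2]
  simp only [h₀, LinearMap.comp_apply, LinearEquiv.coe_coe, h1, Submodule.liftQ_apply]

private lemma range_le_of_ker_le' {V : Type*} [Fintype V] [DecidableEq V]
    {d e : ℕ} (P : Matrix (Fin d) V ℝ) (Q : Matrix (Fin e) V ℝ)
    (hker : LinearMap.ker (Qᵀ * Q).mulVecLin ≤ LinearMap.ker (Pᵀ * P).mulVecLin) :
    LinearMap.range (Pᵀ * P).mulVecLin ≤ LinearMap.range (Qᵀ * Q).mulVecLin := by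
  rw [ker_mulVecLin_transpose_mul_self, ker_mulVecLin_transpose_mul_self] at hker
  obtain ⟨h, hh⟩ := factor_of_ker_le P.mulVecLin Q.mulVecLin hker
  set R := LinearMap.toMatrix' h with hR
  have hPQ : P = R * Q := by
    apply Matrix.toLin'.injective
    rw [Matrix.toLin'_mul, hR, Matrix.toLin'_toMatrix']
    exact hh
  have hrange : LinearMap.range (Qᵀ * Q).mulVecLin = LinearMap.range Qᵀ.mulVecLin := by
    apply Submodule.eq_of_le_of_finrank_le
    · rintro y ⟨x, rfl⟩
      exact ⟨Q *ᵥ x, by simp [mulVecLin_apply, mulVec_mulVec]⟩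
    · have h1 : (Qᵀ * Q).rank = Q.rank := Matrix.rank_transpose_mul_self Q
      have h2 : Qᵀ.rank = Q.rank := Matrix.rank_transpose Q
      unfold Matrix.rank at h1 h2
      omega
  rw [hrange]
  rintro y ⟨x, rfl⟩
  refine ⟨(Rᵀ * (R * Q)) *ᵥ x, ?_⟩
  simp only [mulVecLin_apply, mulVec_mulVec]
  rw [hPQ, transpose_mul]
  simp only [Matrix.mul_assoc]

private lemma colMat_gram {V : Type*} [Fintype V] {d : ℕ} (p : V → Fin d → ℝ) :
    gramMat p = (Matrix.of fun k i => p i k)ᵀ * (Matrix.of fun k i => p i k) := by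
  ext i j
  simp [gramMat, Matrix.mul_apply, dotProduct]

private lemma gram_posSemidef {V : Type*} [Fintype V] {d : ℕ} (p : V → Fin d → ℝ) :
    (gramMat p).PosSemidef := by
  rw [colMat_gram p, ← Matrix.conjTranspose_eq_transpose_of_trivial]
  exact Matrix.posSemidef_conjTranspose_mul_self _

/-- A Gram matrix of an optimal vector coloring of maximum rank has
the largest image among Gram matrices of all optimal vector colorings. -/
theorem image_le_of_max_rank {V : Type*} [Fintype V] (G : SimpleGraph V)
    (Mhat : Matrix V V ℝ) (h1 : IsOptGram G Mhat)
    (h2 : ∀ M : Matrix V V ℝ, IsOptGram G M → M.rank ≤ Mhat.rank) :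
    ∀ M : Matrix V V ℝ, IsOptGram G M →
      LinearMap.range M.mulVecLin ≤ LinearMap.range Mhat.mulVecLin := by
    classical
  intro M hM
  obtain ⟨d', p', hc', rfl⟩ := h1
  obtain ⟨d, p, hc, rfl⟩ := hM
  set c : ℝ := Real.sqrt 2⁻¹ with hcdef
  have hc2 : c * c = 2⁻¹ := Real.mul_self_sqrt (by norm_num)
  set q : V → Fin (d + d') → ℝ := fun i => Fin.append (c • p i) (c • p' i) with hq
  have key : ∀ i j, q i ⬝ᵥ q j = 2⁻¹ * (p i ⬝ᵥ p j) + 2⁻¹ * (p' i ⬝ᵥ p' j) := by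
    intro i j
    have h1 : ∀ a b : ℝ, (c * a) * (c * b) = 2⁻¹ * (a * b) := fun a b => by
      rw [← hc2]; ring
    simp only [hq, dotProduct, Fin.sum_univ_add, Fin.append_left, Fin.append_right,
      Pi.smul_apply, smul_eq_mul, h1]
    rw [← Finset.mul_sum, ← Finset.mul_sum]
  have hcolq : IsVecColoring G (vecChrom G) q := by
    constructor
    · intro i; rw [key, hc.1 i, hc'.1 i]; ring
    · intro i j hij
      have e1 := hc.2 i j hij
      have e2 := hc'.2 i j hij
      rw [key]; linarith
  have hNopt : IsOptGram G (gramMat q) := ⟨_, q, hcolq, rfl⟩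
  have hrk := h2 _ hNopt
  have hNmat : gramMat q = (2⁻¹ : ℝ) • gramMat p + (2⁻¹ : ℝ) • gramMat p' := by
    ext i j
    simp [gramMat, key, Matrix.add_apply, Matrix.smul_apply, smul_eq_mul]
  have hPSD := gram_posSemidef p
  have hPSD' := gram_posSemidef p'
  have hkerle : ∀ x, gramMat q *ᵥ x = 0 → gramMat p' *ᵥ x = 0 ∧ gramMat p *ᵥ x = 0 := by
    intro x hx
    have e0 : x ⬝ᵥ (gramMat q *ᵥ x) = 0 := by rw [hx, dotProduct_zero]
    have e1 : x ⬝ᵥ (gramMat q *ᵥ x)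
        = 2⁻¹ * (x ⬝ᵥ (gramMat p *ᵥ x)) + 2⁻¹ * (x ⬝ᵥ (gramMat p' *ᵥ x)) := by
      rw [hNmat]
      simp [Matrix.add_mulVec, Matrix.smul_mulVec, dotProduct_add,
        dotProduct_smul, smul_eq_mul]
    have n1 : 0 ≤ x ⬝ᵥ (gramMat p *ᵥ x) := by simpa [star_trivial] using hPSD.dotProduct_mulVec_nonneg x
    have n2 : 0 ≤ x ⬝ᵥ (gramMat p' *ᵥ x) := by simpa [star_trivial] using hPSD'.dotProduct_mulVec_nonneg x
    constructor
    · exact (hPSD'.dotProduct_mulVec_zero_iff x).mp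
        (by simpa [star_trivial] using (by linarith : x ⬝ᵥ (gramMat p' *ᵥ x) = 0))
    · exact (hPSD.dotProduct_mulVec_zero_iff x).mp
        (by simpa [star_trivial] using (by linarith : x ⬝ᵥ (gramMat p *ᵥ x) = 0))
  have hkerN1 : LinearMap.ker (gramMat q).mulVecLin ≤ LinearMap.ker (gramMat p').mulVecLin := by
    intro x hx
    rw [LinearMap.mem_ker, Matrix.mulVecLin_apply] at hx ⊢
    exact (hkerle x hx).1
  have hkerN2 : LinearMap.ker (gramMat q).mulVecLin ≤ LinearMap.ker (gramMat p).mulVecLin := by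
    intro x hx
    rw [LinearMap.mem_ker, Matrix.mulVecLin_apply] at hx ⊢
    exact (hkerle x hx).2
  have rn1 := LinearMap.finrank_range_add_finrank_ker (gramMat q).mulVecLin
  have rn2 := LinearMap.finrank_range_add_finrank_ker (gramMat p').mulVecLin
  unfold Matrix.rank at hrk
  have hfr : Module.finrank ℝ (LinearMap.ker (gramMat p').mulVecLin)
      ≤ Module.finrank ℝ (LinearMap.ker (gramMat q).mulVecLin) := by omega
  have hkeq : LinearMap.ker (gramMat q).mulVecLin = LinearMap.ker (gramMat p').mulVecLin :=
    Submodule.eq_of_le_of_finrank_le hkerN1 hfr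
  have hfinal : LinearMap.ker (gramMat p').mulVecLin ≤ LinearMap.ker (gramMat p).mulVecLin :=
    hkeq ▸ hkerN2
  rw [colMat_gram p, colMat_gram p']
  exact range_le_of_ker_le' _ _ (by rw [← colMat_gram p, ← colMat_gram p']; exact hfinal)
end

section
/- Let G and H be finite simple graphs with χ_v(G) = χ_v(H). Suppose M ⊗ J + J ⊗ N is the Gram matrix of an optimal vector coloring of G × H, where M and N are positive semidefinite real matrices indexed by V(G) and V(H) respectively and J denotes an all-ones matrix of the appropriate size. Then there exist α, β ≥ 0 with α + β = 1 and Gram matrices M' and N' of optimal vector colorings of G and H respectively such that M ⊗ J + J ⊗ N = α(M' ⊗ J) + β(J ⊗ N'). -/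
open Matrix Kronecker

noncomputable section VectorColoring

variable {V α β : Type*}

lemma dot_self_nonneg {d : ℕ} (v : Fin d → ℝ) : 0 ≤ v ⬝ᵥ v :=
  Finset.sum_nonneg fun i _ => mul_self_nonneg _

lemma gram_psd [Fintype V] {d : ℕ} (p : V → Fin d → ℝ) : (gramMat p).PosSemidef := by
  have h : gramMat p = (Matrix.of fun (k : Fin d) (i : V) => p i k)ᴴ *
      (Matrix.of fun (k : Fin d) (i : V) => p i k) := by
    ext i j
    simp [gramMat, Matrix.mul_apply, dotProduct, Matrix.conjTranspose_apply]
  rw [h]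
  exact Matrix.posSemidef_conjTranspose_mul_self _

lemma psd_gram [Fintype V] {M : Matrix V V ℝ} (hM : M.PosSemidef) :
    ∃ p : V → Fin (Fintype.card V) → ℝ, gramMat p = M := by
  obtain ⟨B, hB⟩ : ∃ B : Matrix V V ℝ, M = Bᴴ * B := by
    classical
    open scoped MatrixOrder in exact CStarAlgebra.nonneg_iff_eq_star_mul_self.mp hM.nonneg
  let e := Fintype.equivFin V
  refine ⟨fun i k => B (e.symm k) i, ?_⟩
  ext i j
  have h2 : M i j = ∑ v : V, B v i * B v j := by
    rw [hB]; simp [Matrix.mul_apply, Matrix.conjTranspose_apply]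
  rw [h2]
  simpa [gramMat, dotProduct] using
    (Equiv.sum_comp e.symm fun v => B v i * B v j)

lemma psd_quad [Fintype V] {M : Matrix V V ℝ} (hM : M.PosSemidef) (x : V → ℝ) :
    0 ≤ x ⬝ᵥ (M *ᵥ x) := by
  simpa using hM.dotProduct_mulVec_nonneg x

lemma psd_symm [Fintype V] {M : Matrix V V ℝ} (hM : M.PosSemidef) (i j : V) :
    M j i = M i j := by
  have := hM.1.apply i j
  simpa using this

lemma psd_pair [Fintype V] [DecidableEq V] {M : Matrix V V ℝ} (hM : M.PosSemidef)
    (i j : V) (s : ℝ) : 0 ≤ M i i + 2 * s * M i j + s ^ 2 * M j j := by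
  have h := psd_quad hM (Pi.single i 1 + Pi.single j s)
  rw [Matrix.mulVec_add, dotProduct_add, add_dotProduct,
    add_dotProduct, Matrix.mulVec_single, Matrix.mulVec_single] at h
  simp only [single_dotProduct, Pi.smul_apply, Matrix.col_apply, MulOpposite.smul_eq_mul_unop,
    MulOpposite.unop_op] at h
  rw [psd_symm hM i j] at h
  ring_nf at h ⊢
  linarith

lemma psd_diag_nonneg [Fintype V] {M : Matrix V V ℝ} (hM : M.PosSemidef) (i : V) :
    0 ≤ M i i := by
  classical
  have := psd_pair hM i i 0
  nlinarith

lemma psd_entry_bounds [Fintype V] {M : Matrix V V ℝ} (hM : M.PosSemidef) (i j : V) :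
    -(M i i + M j j) ≤ 2 * M i j ∧ 2 * M i j ≤ M i i + M j j := by
  classical
  have h1 := psd_pair hM i j 1
  have h2 := psd_pair hM i j (-1)
  constructor <;> nlinarith

lemma psd_zero_diag [Fintype V] {M : Matrix V V ℝ} (hM : M.PosSemidef)
    (hd : ∀ i, M i i = 0) : M = 0 := by
  ext i j
  have h := psd_entry_bounds hM i j
  rw [hd i, hd j] at h
  simp only [Matrix.zero_apply]
  linarith [h.1, h.2]

lemma psd_smul [Fintype V] {M : Matrix V V ℝ} (hM : M.PosSemidef) {c : ℝ}
    (hc : 0 ≤ c) : (c • M).PosSemidef := by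
  refine .of_dotProduct_mulVec_nonneg ?_ fun x => ?_
  · have := hM.1
    unfold Matrix.IsHermitian at *
    rw [Matrix.conjTranspose_smul, this]
    simp
  · rw [Matrix.smul_mulVec, dotProduct_smul]
    have := hM.dotProduct_mulVec_nonneg x
    simpa using mul_nonneg hc (by simpa using this)

def vcSet [Fintype V] (G : SimpleGraph V) : Set ℝ :=
  {t : ℝ | 1 ≤ t ∧ ∃ (d : ℕ) (p : V → Fin d → ℝ), IsVecColoring G t p}

lemma vecChrom_eq_sInf [Fintype V] (G : SimpleGraph V) : vecChrom G = sInf (vcSet G) := rfl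

lemma bddBelow_vcSet [Fintype V] (G : SimpleGraph V) : BddBelow (vcSet G) :=
  ⟨1, fun _ ht => ht.1⟩

lemma coloring_of_matrix [Fintype V] (G : SimpleGraph V) (t : ℝ) {M : Matrix V V ℝ}
    (hM : M.PosSemidef) (hd : ∀ i, M i i = t - 1)
    (he : ∀ i j, G.Adj i j → M i j ≤ -1) :
    ∃ p : V → Fin (Fintype.card V) → ℝ, IsVecColoring G t p ∧ gramMat p = M := by
  obtain ⟨p, hp⟩ := psd_gram hM
  refine ⟨p, ⟨fun i => ?_, fun i j hij => ?_⟩, hp⟩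
  · have := congrFun (congrFun hp i) i
    simp only [gramMat, Matrix.of_apply] at this
    rw [this, hd]
  · have := congrFun (congrFun hp i) j
    simp only [gramMat, Matrix.of_apply] at this
    rw [this]
    exact he i j hij

lemma simplex_mem [Fintype V] (G : SimpleGraph V) :
    ((Fintype.card V : ℝ) + 2) ∈ vcSet G := by
  classical
  set c : ℝ := (Fintype.card V : ℝ)
  have hc : 0 ≤ c := Nat.cast_nonneg _
  set M : Matrix V V ℝ := (c + 2) • (1 : Matrix V V ℝ) - Matrix.of (fun _ _ => 1) with hMdef
  have hMapp : ∀ i j, M i j = (c + 2) * (if i = j then 1 else 0) - 1 := by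
    intro i j
    simp [hMdef, Matrix.one_apply, Matrix.sub_apply]
  have hpsd : M.PosSemidef := by
    refine .of_dotProduct_mulVec_nonneg ?_ ?_
    · show Mᴴ = M
      ext i j
      simp only [Matrix.conjTranspose_apply, star_trivial]
      rw [hMapp i j, hMapp j i]
      by_cases h : i = j <;> simp [h, eq_comm]
    · intro x
      have hquad : star x ⬝ᵥ M *ᵥ x = (c + 2) * (∑ i, x i ^ 2) - (∑ i, x i) ^ 2 := by
        rw [hMdef, Matrix.sub_mulVec, Matrix.smul_mulVec, Matrix.one_mulVec]
        rw [star_trivial, dotProduct_sub, dotProduct_smul]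
        have h1 : x ⬝ᵥ x = ∑ i, x i ^ 2 := by
          simp [dotProduct, sq]
        have h2 : x ⬝ᵥ (Matrix.of (fun (_ _ : V) => (1:ℝ)) *ᵥ x) = (∑ i, x i) ^ 2 := by
          simp [dotProduct, Matrix.mulVec, sq, Finset.mul_sum, Finset.sum_mul, mul_comm]
        rw [h1, h2]
        simp [smul_eq_mul]
      rw [hquad]
      have hCS : (∑ i, x i) ^ 2 ≤ c * ∑ i, x i ^ 2 := by
        simpa using (sq_sum_le_card_mul_sum_sq (s := Finset.univ) (f := x))
      have hx2 : 0 ≤ ∑ i, x i ^ 2 := Finset.sum_nonneg fun i _ => sq_nonneg _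
      nlinarith
  have hdiag : ∀ i, M i i = (c + 2) - 1 := by
    intro i; rw [hMapp]; simp
  have hedge : ∀ i j, G.Adj i j → M i j ≤ -1 := by
    intro i j hij
    rw [hMapp]
    simp [hij.ne]
  obtain ⟨p, hp, _⟩ := coloring_of_matrix G (c + 2) hpsd hdiag hedge
  exact ⟨by linarith, _, p, hp⟩

lemma vcSet_nonempty [Fintype V] (G : SimpleGraph V) : (vcSet G).Nonempty :=
  ⟨_, simplex_mem G⟩

lemma one_le_vecChrom [Fintype V] (G : SimpleGraph V) : 1 ≤ vecChrom G :=
  le_csInf (vcSet_nonempty G) fun _ ht => ht.1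

lemma vecChrom_le [Fintype V] {G : SimpleGraph V} {t : ℝ} (ht : t ∈ vcSet G) :
    vecChrom G ≤ t :=
  csInf_le (bddBelow_vcSet G) ht


lemma vecChrom_attained [Fintype V] (G : SimpleGraph V) :
    ∃ p : V → Fin (Fintype.card V) → ℝ, IsVecColoring G (vecChrom G) p := by
  classical
  set T : ℝ := (Fintype.card V : ℝ) + 2 with hTdef
  have hT1 : 1 ≤ T := by
    have : (0:ℝ) ≤ (Fintype.card V : ℝ) := Nat.cast_nonneg _
    linarith
  set C : Set (ℝ × (V → V → ℝ)) :=
    {x | x.1 ∈ Set.Icc (1:ℝ) T ∧ Matrix.PosSemidef (Matrix.of x.2) ∧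
      (∀ i, x.2 i i = x.1 - 1) ∧ ∀ i j, G.Adj i j → x.2 i j ≤ -1} with hCdef
  have hentry : ∀ i j : V, Continuous fun x : ℝ × (V → V → ℝ) => x.2 i j := fun i j =>
    (continuous_apply j).comp ((continuous_apply i).comp continuous_snd)
  have hC : IsClosed C := by
    have h1 : IsClosed {x : ℝ × (V → V → ℝ) | x.1 ∈ Set.Icc (1:ℝ) T} :=
      isClosed_Icc.preimage continuous_fst
    have h2 : IsClosed {x : ℝ × (V → V → ℝ) | Matrix.PosSemidef (Matrix.of x.2)} := by
      have heq : {x : ℝ × (V → V → ℝ) | Matrix.PosSemidef (Matrix.of x.2)} =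
          (⋂ (i : V) (j : V), {x : ℝ × (V → V → ℝ) | x.2 j i = x.2 i j}) ∩
          (⋂ v : V → ℝ, {x : ℝ × (V → V → ℝ) | 0 ≤ ∑ i, v i * ∑ j, x.2 i j * v j}) := by
        ext x
        simp only [Set.mem_setOf_eq, Set.mem_inter_iff, Set.mem_iInter]
        constructor
        · intro hx
          refine ⟨fun i j => psd_symm hx i j, fun v => ?_⟩
          have := psd_quad hx v
          simpa [dotProduct, Matrix.mulVec] using this
        · rintro ⟨hsym, hquad⟩
          refine .of_dotProduct_mulVec_nonneg ?_ fun v => ?_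
          · show (Matrix.of x.2)ᴴ = Matrix.of x.2
            ext i j
            simpa using (hsym j i).symm
          · have := hquad v
            simpa [dotProduct, Matrix.mulVec] using this
      rw [heq]
      refine IsClosed.inter (isClosed_iInter fun i => isClosed_iInter fun j => ?_)
        (isClosed_iInter fun v => ?_)
      · exact isClosed_eq (hentry j i) (hentry i j)
      · refine isClosed_le continuous_const ?_
        refine continuous_finset_sum _ fun i _ => Continuous.mul continuous_const ?_
        exact continuous_finset_sum _ fun j _ => (hentry i j).mul continuous_const
    have h3 : IsClosed {x : ℝ × (V → V → ℝ) | ∀ i, x.2 i i = x.1 - 1} := by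
      have : {x : ℝ × (V → V → ℝ) | ∀ i, x.2 i i = x.1 - 1} =
          ⋂ i : V, {x : ℝ × (V → V → ℝ) | x.2 i i = x.1 - 1} := by
        ext x; simp [Set.mem_iInter]
      rw [this]
      exact isClosed_iInter fun i =>
        isClosed_eq (hentry i i) (continuous_fst.sub continuous_const)
    have h4 : IsClosed {x : ℝ × (V → V → ℝ) | ∀ i j, G.Adj i j → x.2 i j ≤ -1} := by
      have : {x : ℝ × (V → V → ℝ) | ∀ i j, G.Adj i j → x.2 i j ≤ -1} =
          ⋂ (i : V) (j : V), {x : ℝ × (V → V → ℝ) | G.Adj i j → x.2 i j ≤ -1} := by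
        ext x; simp [Set.mem_iInter]
      rw [this]
      refine isClosed_iInter fun i => isClosed_iInter fun j => ?_
      by_cases hij : G.Adj i j
      · have : {x : ℝ × (V → V → ℝ) | G.Adj i j → x.2 i j ≤ -1} =
            {x : ℝ × (V → V → ℝ) | x.2 i j ≤ -1} := by
          ext x; simp [hij]
        rw [this]
        exact isClosed_le (hentry i j) continuous_const
      · have : {x : ℝ × (V → V → ℝ) | G.Adj i j → x.2 i j ≤ -1} = Set.univ := by
          ext x; simp [hij]
        rw [this]
        exact isClosed_univ
    have hCeq : C = {x : ℝ × (V → V → ℝ) | x.1 ∈ Set.Icc (1:ℝ) T} ∩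
        ({x | Matrix.PosSemidef (Matrix.of x.2)} ∩
        ({x | ∀ i, x.2 i i = x.1 - 1} ∩ {x | ∀ i j, G.Adj i j → x.2 i j ≤ -1})) := by
      ext x
      simp only [hCdef, Set.mem_setOf_eq, Set.mem_inter_iff]
      try tauto
    rw [hCeq]
    exact h1.inter (h2.inter (h3.inter h4))
  have hsub : C ⊆ Set.Icc ((1:ℝ), fun _ _ => -(T-1)) (T, fun _ _ => T-1) := by
    rintro ⟨t, W⟩ ⟨⟨ht1, htT⟩, hpsd, hdiag, _⟩
    have hbd : ∀ i j, -(T-1) ≤ W i j ∧ W i j ≤ T-1 := by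
      intro i j
      have hb := psd_entry_bounds hpsd i j
      have hdii : (Matrix.of W) i i = t - 1 := hdiag i
      have hdjj : (Matrix.of W) j j = t - 1 := hdiag j
      rw [hdii, hdjj] at hb
      simp only [Matrix.of_apply] at hb
      constructor <;> [linarith [hb.1]; linarith [hb.2]]
    constructor
    · exact ⟨ht1, fun i => fun j => (hbd i j).1⟩
    · exact ⟨htT, fun i => fun j => (hbd i j).2⟩
  have hCcpt : IsCompact C := IsCompact.of_isClosed_subset isCompact_Icc hC hsub
  set P : Set ℝ := Prod.fst '' C with hPdef
  have hPcpt : IsCompact P := hCcpt.image continuous_fst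
  have hPclosed : IsClosed P := hPcpt.isClosed
  have hPS : P ⊆ vcSet G := by
    rintro t ⟨⟨t', W⟩, ⟨⟨ht1, _⟩, hpsd, hdiag, hedge⟩, rfl⟩
    obtain ⟨p, hp, _⟩ := coloring_of_matrix G t' hpsd hdiag hedge
    exact ⟨ht1, _, p, hp⟩
  have hSP : ∀ t ∈ vcSet G, t ≤ T → t ∈ P := by
    rintro t ⟨ht1, d, p, hp⟩ htT
    refine ⟨(t, fun i j => p i ⬝ᵥ p j), ⟨⟨ht1, htT⟩, ?_, fun i => hp.1 i, hp.2⟩, rfl⟩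
    exact gram_psd p
  have hTmem : T ∈ vcSet G := by
    have := simplex_mem G
    rwa [← hTdef] at this
  set S' : Set ℝ := vcSet G ∩ Set.Icc 1 T with hS'def
  have hS'ne : S'.Nonempty := ⟨T, hTmem, hT1, le_refl T⟩
  have hS'bdd : BddBelow S' := ⟨1, fun t ht => ht.2.1⟩
  have hle1 : vecChrom G ≤ sInf S' :=
    csInf_le_csInf (bddBelow_vcSet G) hS'ne Set.inter_subset_left
  have hle2 : sInf S' ≤ vecChrom G := by
    refine le_csInf (vcSet_nonempty G) fun s hs => ?_
    rcases le_or_gt s T with hsT | hsT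
    · exact csInf_le hS'bdd ⟨hs, hs.1, hsT⟩
    · exact le_trans (csInf_le hS'bdd ⟨hTmem, hT1, le_refl T⟩) hsT.le
  have hval : sInf S' = vecChrom G := le_antisymm hle2 hle1
  have hmem : vecChrom G ∈ P := by
    have h1 : sInf S' ∈ closure S' := csInf_mem_closure hS'ne hS'bdd
    have h2 : S' ⊆ P := fun t ht => hSP t ht.1 ht.2.2
    have h3 : closure S' ⊆ P := hPclosed.closure_subset_iff.mpr h2
    rw [hval] at h1
    exact h3 h1
  obtain ⟨⟨t', W⟩, ⟨_, hpsd, hdiag, hedge⟩, hfst⟩ := hmem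
  obtain ⟨p, hp, _⟩ := coloring_of_matrix G t' hpsd hdiag hedge
  rw [← hfst]
  exact ⟨p, hp⟩

lemma exists_optGram [Fintype V] (G : SimpleGraph V) : ∃ M, IsOptGram G M := by
  obtain ⟨p, hp⟩ := vecChrom_attained G
  exact ⟨gramMat p, _, p, hp, rfl⟩


lemma catProd_le_left [Fintype α] [Fintype β] (G : SimpleGraph α) (H : SimpleGraph β) :
    vecChrom (catProd G H) ≤ vecChrom G := by
  refine csInf_le_csInf (bddBelow_vcSet _) (vcSet_nonempty G) ?_
  rintro t ⟨ht1, d, p, hp⟩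
  exact ⟨ht1, d, fun x => p x.1, fun x => hp.1 x.1, fun x y hxy => hp.2 x.1 y.1 hxy.1⟩

lemma catProd_le_right [Fintype α] [Fintype β] (G : SimpleGraph α) (H : SimpleGraph β) :
    vecChrom (catProd G H) ≤ vecChrom H := by
  refine csInf_le_csInf (bddBelow_vcSet _) (vcSet_nonempty H) ?_
  rintro t ⟨ht1, d, p, hp⟩
  exact ⟨ht1, d, fun x => p x.2, fun x => hp.1 x.2, fun x y hxy => hp.2 x.2 y.2 hxy.2⟩

lemma mem_vcSet_of_ge [Fintype V] (G : SimpleGraph V)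
    (hG : ∀ i j, ¬ G.Adj i j) {t : ℝ} (ht : 1 ≤ t) : t ∈ vcSet G := by
  refine ⟨ht, 1, fun _ _ => Real.sqrt (t - 1), fun i => ?_, fun i j hij => (hG i j hij).elim⟩
  simp [dotProduct, Real.mul_self_sqrt (show (0:ℝ) ≤ t - 1 by linarith)]

lemma vecChrom_edgeless [Fintype V] (G : SimpleGraph V)
    (hG : ∀ i j, ¬ G.Adj i j) : vecChrom G = 1 :=
  le_antisymm (vecChrom_le (mem_vcSet_of_ge G hG le_rfl)) (one_le_vecChrom G)

lemma two_le_of_mem [Fintype V] {G : SimpleGraph V} {i j : V} (hij : G.Adj i j)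
    {t : ℝ} (ht : t ∈ vcSet G) : 2 ≤ t := by
  obtain ⟨ht1, d, p, hp⟩ := ht
  have h1 : p i ⬝ᵥ p j ≤ -1 := hp.2 i j hij
  have h2 : 0 ≤ (p i + p j) ⬝ᵥ (p i + p j) := dot_self_nonneg _
  rw [add_dotProduct, dotProduct_add, dotProduct_add] at h2
  rw [dotProduct_comm (p j) (p i)] at h2
  have h3 := hp.1 i
  have h4 := hp.1 j
  linarith

lemma two_le_vecChrom [Fintype V] {G : SimpleGraph V} {i j : V} (hij : G.Adj i j) :
    2 ≤ vecChrom G :=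
  le_csInf (vcSet_nonempty G) fun _ ht => two_le_of_mem hij ht

lemma no_slack [Fintype V] (G : SimpleGraph V) {A : Matrix V V ℝ} (hA : A.PosSemidef)
    {mA δ t : ℝ} (hδ : 0 < δ) (ht : 2 ≤ t) (hub : t ≤ vecChrom G)
    (hdiag : ∀ i, A i i = mA) (hmA : 0 ≤ mA)
    (hedge : ∀ i j, G.Adj i j → (t - 1) * A i j ≤ -mA - δ) : False := by
  have hmδ : 0 < mA + δ := by linarith
  have ht1 : (0:ℝ) < t - 1 := by linarith
  set s : ℝ := (t - 1) / (mA + δ) with hsdef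
  have hs : 0 < s := div_pos ht1 hmδ
  have hP : (s • A).PosSemidef := psd_smul hA hs.le
  set t' : ℝ := s * mA + 1 with ht'def
  have hPdiag : ∀ i, (s • A) i i = t' - 1 := by
    intro i
    simp [Matrix.smul_apply, hdiag i, ht'def, smul_eq_mul]
  have hPedge : ∀ i j, G.Adj i j → (s • A) i j ≤ -1 := by
    intro i j hij
    have h := hedge i j hij
    have : s * A i j = ((t - 1) * A i j) / (mA + δ) := by
      rw [hsdef]; ring
    rw [Matrix.smul_apply, smul_eq_mul, this, div_le_iff₀ hmδ]
    linarith
  obtain ⟨p, hp, _⟩ := coloring_of_matrix G t' hP hPdiag hPedge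
  have hmem : t' ∈ vcSet G := ⟨by nlinarith, _, p, hp⟩
  have hlt : t' < t := by
    have : s * mA < t - 1 := by
      rw [hsdef, div_mul_eq_mul_div, div_lt_iff₀ hmδ]
      nlinarith
    linarith
  have := vecChrom_le hmem
  linarith



end VectorColoring

/-- If `χ_v(G) = χ_v(H)` and `M ⊗ J + J ⊗ N` with `M, N ⪰ 0` is the
Gram matrix of an optimal vector coloring of `G × H`, then it is a convex combination
`α (M' ⊗ J) + β (J ⊗ N')` of Gram matrices of optimal vector colorings of the factors. -/
theorem sum_kron_is_convex_comb {α β : Type*} [Fintype α] [Fintype β]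
    (G : SimpleGraph α) (H : SimpleGraph β) (h : vecChrom G = vecChrom H)
    (M : Matrix α α ℝ) (N : Matrix β β ℝ) (hM : M.PosSemidef) (hN : N.PosSemidef)
    (hopt : IsOptGram (catProd G H) (M ⊗ₖ allOnes β + allOnes α ⊗ₖ N)) :
    IsConvexCombInduced G H (M ⊗ₖ allOnes β + allOnes α ⊗ₖ N) := by
  classical
  obtain ⟨dq, q, hq, hWq⟩ := hopt
  have hent : ∀ (i : α) (l : β) (j : α) (k : β),
      M i j + N l k = q (i,l) ⬝ᵥ q (j,k) := by
    intro i l j k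
    have hc := congrFun (congrFun hWq (i,l)) (j,k)
    simpa [Matrix.add_apply, Matrix.kroneckerMap_apply, allOnes, gramMat] using hc
  set t := vecChrom (catProd G H) with htdef
  by_cases hne : Nonempty α ∧ Nonempty β
  swap
  · obtain ⟨MG, hMG⟩ := exists_optGram G
    obtain ⟨NH, hNH⟩ := exists_optGram H
    refine ⟨1, 0, MG, NH, zero_le_one, le_rfl, by ring, hMG, hNH, ?_⟩
    have hemp : IsEmpty (α × β) := by
      rw [not_and_or] at hne
      rcases hne with hh | hh
      · exact ⟨fun x => (not_nonempty_iff.mp hh).false x.1⟩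
      · exact ⟨fun x => (not_nonempty_iff.mp hh).false x.2⟩
    ext x y
    exact (hemp.false x).elim
  obtain ⟨⟨i0⟩, ⟨l0⟩⟩ := hne
  have hdiagq : ∀ (i : α) (l : β), M i i + N l l = t - 1 := fun i l => by
    rw [hent i l i l]; exact hq.1 (i,l)
  set m := M i0 i0 with hmdef
  set n := N l0 l0 with hndef
  have hMd : ∀ i, M i i = m := fun i => by
    have h1 := hdiagq i l0; have h2 := hdiagq i0 l0; rw [hndef] at *; linarith
  have hNd : ∀ l, N l l = n := fun l => by
    have h1 := hdiagq i0 l; have h2 := hdiagq i0 l0; rw [hmdef] at *; linarith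
  have hmn : m + n = t - 1 := hdiagq i0 l0
  have hm0 : 0 ≤ m := hmdef ▸ psd_diag_nonneg hM i0
  have hn0 : 0 ≤ n := hndef ▸ psd_diag_nonneg hN l0
  by_cases hGE : ∃ x : α × α, G.Adj x.1 x.2
  swap
  · -- G edgeless, hence (via h) H edgeless, t = 1, M = N = 0
    have hGel : ∀ i j, ¬ G.Adj i j := fun i j hij => hGE ⟨(i,j), hij⟩
    have hvG : vecChrom G = 1 := vecChrom_edgeless G hGel
    have hHel : ∀ l k, ¬ H.Adj l k := by
      intro l k hlk
      have := two_le_vecChrom hlk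
      rw [← h, hvG] at this
      linarith
    have hvH : vecChrom H = 1 := vecChrom_edgeless H hHel
    have hprodel : ∀ x y, ¬ (catProd G H).Adj x y := fun x y hxy => hGel _ _ hxy.1
    have ht1 : t = 1 := vecChrom_edgeless _ hprodel
    have hmz : m = 0 := by rw [ht1] at hmn; linarith
    have hnz : n = 0 := by rw [ht1] at hmn; linarith
    have hMzero : M = 0 := psd_zero_diag hM (fun i => by rw [hMd i, hmz])
    have hNzero : N = 0 := psd_zero_diag hN (fun l => by rw [hNd l, hnz])
    have hoptG : IsOptGram G (0 : Matrix α α ℝ) := by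
      refine ⟨0, fun _ => (fun x => x.elim0), ⟨fun i => ?_, fun i j hij => (hGel i j hij).elim⟩, ?_⟩
      · rw [hvG]; simp [dotProduct]
      · ext i j; simp [gramMat, dotProduct]
    have hoptH : IsOptGram H (0 : Matrix β β ℝ) := by
      refine ⟨0, fun _ => (fun x => x.elim0), ⟨fun l => ?_, fun l k hlk => (hHel l k hlk).elim⟩, ?_⟩
      · rw [hvH]; simp [dotProduct]
      · ext l k; simp [gramMat, dotProduct]
    refine ⟨1, 0, 0, 0, zero_le_one, le_rfl, by ring, hoptG, hoptH, ?_⟩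
    ext ⟨i,l⟩ ⟨j,k⟩
    simp [hMzero, hNzero]
  obtain ⟨⟨ia, ja⟩, hija⟩ := hGE
  by_cases hHE : ∃ x : β × β, H.Adj x.1 x.2
  swap
  · -- H edgeless: symmetric
    have hHel : ∀ l k, ¬ H.Adj l k := fun l k hlk => hHE ⟨(l,k), hlk⟩
    have hvH : vecChrom H = 1 := vecChrom_edgeless H hHel
    have : (2:ℝ) ≤ 1 := by
      have h2 := two_le_vecChrom hija
      rw [h, hvH] at h2
      exact h2
    linarith
  obtain ⟨⟨lb, kb⟩, hlkb⟩ := hHE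
  have ht2 : 2 ≤ t := by
    have hpe : (catProd G H).Adj (ia, lb) (ja, kb) := ⟨hija, hlkb⟩
    exact two_le_vecChrom hpe
  have ht1 : (0:ℝ) < t - 1 := by linarith
  have htG : t ≤ vecChrom G := catProd_le_left G H
  have htH : t ≤ vecChrom H := catProd_le_right G H
  have hcross : ∀ (i j : α) (l k : β), G.Adj i j → H.Adj l k → M i j + N l k ≤ -1 := by
    intro i j l k hij hlk
    rw [hent i l j k]
    exact hq.2 (i,l) (j,k) ⟨hij, hlk⟩
  have CG : ∀ i j, G.Adj i j → (t - 1) * M i j + m ≤ 0 := by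
    intro i j hij
    by_contra hcon
    push_neg at hcon
    have hδ : 0 < (t - 1) * M i j + m := hcon
    refine no_slack H hN hδ ht2 htH hNd hn0 ?_
    intro l k hlk
    have h1 := hcross i j l k hij hlk
    nlinarith
  have CH : ∀ l k, H.Adj l k → (t - 1) * N l k + n ≤ 0 := by
    intro l k hlk
    by_contra hcon
    push_neg at hcon
    have hδ : 0 < (t - 1) * N l k + n := hcon
    refine no_slack G hM hδ ht2 htG hMd hm0 ?_
    intro i j hij
    have h1 := hcross i j l k hij hlk
    nlinarith
  by_cases hmz : m = 0
  · -- M = 0, N itself is an optimal Gram for H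
    have hMzero : M = 0 := psd_zero_diag hM (fun i => by rw [hMd i, hmz])
    have hnt : n = t - 1 := by rw [hmz] at hmn; linarith
    have hNdiag : ∀ l, N l l = t - 1 := fun l => by rw [hNd l, hnt]
    have hNedge : ∀ l k, H.Adj l k → N l k ≤ -1 := by
      intro l k hlk
      have h1 := CH l k hlk
      rw [hnt] at h1
      nlinarith
    obtain ⟨p, hp, hgp⟩ := coloring_of_matrix H t hN hNdiag hNedge
    have hvH : vecChrom H = t :=
      le_antisymm (vecChrom_le ⟨by linarith, _, p, hp⟩) htH
    have hoptN : IsOptGram H N := ⟨_, p, by rw [hvH]; exact hp, hgp.symm⟩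
    obtain ⟨MG, hMG⟩ := exists_optGram G
    refine ⟨0, 1, MG, N, le_rfl, zero_le_one, by ring, hMG, hoptN, ?_⟩
    ext ⟨i,l⟩ ⟨j,k⟩
    simp [hMzero, Matrix.kroneckerMap_apply, allOnes]
  by_cases hnz : n = 0
  · have hNzero : N = 0 := psd_zero_diag hN (fun l => by rw [hNd l, hnz])
    have hmt : m = t - 1 := by rw [hnz] at hmn; linarith
    have hMdiag : ∀ i, M i i = t - 1 := fun i => by rw [hMd i, hmt]
    have hMedge : ∀ i j, G.Adj i j → M i j ≤ -1 := by
      intro i j hij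
      have h1 := CG i j hij
      rw [hmt] at h1
      nlinarith
    obtain ⟨p, hp, hgp⟩ := coloring_of_matrix G t hM hMdiag hMedge
    have hvG : vecChrom G = t :=
      le_antisymm (vecChrom_le ⟨by linarith, _, p, hp⟩) htG
    have hoptM : IsOptGram G M := ⟨_, p, by rw [hvG]; exact hp, hgp.symm⟩
    obtain ⟨NH, hNH⟩ := exists_optGram H
    refine ⟨1, 0, M, NH, zero_le_one, le_rfl, by ring, hoptM, hNH, ?_⟩
    ext ⟨i,l⟩ ⟨j,k⟩
    simp [hNzero, Matrix.kroneckerMap_apply, allOnes]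
  -- main case : m > 0 and n > 0
  have hmpos : 0 < m := lt_of_le_of_ne hm0 (Ne.symm hmz)
  have hnpos : 0 < n := lt_of_le_of_ne hn0 (Ne.symm hnz)
  set M' : Matrix α α ℝ := ((t-1)/m) • M with hM'def
  set N' : Matrix β β ℝ := ((t-1)/n) • N with hN'def
  have hM'psd : M'.PosSemidef := psd_smul hM (by positivity)
  have hN'psd : N'.PosSemidef := psd_smul hN (by positivity)
  have hM'diag : ∀ i, M' i i = t - 1 := by
    intro i
    rw [hM'def, Matrix.smul_apply, smul_eq_mul, hMd i]
    field_simp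
  have hN'diag : ∀ l, N' l l = t - 1 := by
    intro l
    rw [hN'def, Matrix.smul_apply, smul_eq_mul, hNd l]
    field_simp
  have hM'edge : ∀ i j, G.Adj i j → M' i j ≤ -1 := by
    intro i j hij
    have h1 := CG i j hij
    rw [hM'def, Matrix.smul_apply, smul_eq_mul, div_mul_eq_mul_div, div_le_iff₀ hmpos]
    nlinarith
  have hN'edge : ∀ l k, H.Adj l k → N' l k ≤ -1 := by
    intro l k hlk
    have h1 := CH l k hlk
    rw [hN'def, Matrix.smul_apply, smul_eq_mul, div_mul_eq_mul_div, div_le_iff₀ hnpos]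
    nlinarith
  obtain ⟨p, hp, hgp⟩ := coloring_of_matrix G t hM'psd hM'diag hM'edge
  obtain ⟨r, hr, hgr⟩ := coloring_of_matrix H t hN'psd hN'diag hN'edge
  have hvG : vecChrom G = t :=
    le_antisymm (vecChrom_le ⟨by linarith, _, p, hp⟩) htG
  have hvH : vecChrom H = t :=
    le_antisymm (vecChrom_le ⟨by linarith, _, r, hr⟩) htH
  have hoptM : IsOptGram G M' := ⟨_, p, by rw [hvG]; exact hp, hgp.symm⟩
  have hoptN : IsOptGram H N' := ⟨_, r, by rw [hvH]; exact hr, hgr.symm⟩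
  refine ⟨m/(t-1), n/(t-1), M', N', by positivity, by positivity, ?_, hoptM, hoptN, ?_⟩
  · field_simp
    linarith
  · ext ⟨i,l⟩ ⟨j,k⟩
    simp only [Matrix.add_apply, Matrix.smul_apply, Matrix.kroneckerMap_apply,
      allOnes, Matrix.of_apply, hM'def, hN'def, smul_eq_mul]
    field_simp
end
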